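/- Let 𝓜 be a class of simple binary matroids that is closed under isomorphism and under induced restrictions, with every member of 𝓜 in ℰ₃, and suppose there exists a matroid in ℰ₃ that is not in 𝓜. Then there exists an integer k such that χ(M) ≤ k for every M ∈ 𝓜. -/

import Mathlib

/-- A simple binary matroid `M = (E, G)`: a dimension `n` together with a ground set `E`
of nonzero vectors of `𝔽₂ⁿ` (the points of `G = 𝔽₂ⁿ \ {0}`). -/
structure BinMatroid where
  dim : ℕ
  E : Set (Fin dim → ZMod 2)
  zero_not_mem : 0 ∉ E

namespace BinMatroid

/-- `M.HasIR N` : `M` contains `N` as an induced restriction, i.e. there is an injective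
linear map `φ` with `φ(E(N)) = E(M) ∩ (φ(G') \ {0})`. -/
def HasIR (M N : BinMatroid) : Prop :=
  ∃ φ : (Fin N.dim → ZMod 2) →ₗ[ZMod 2] (Fin M.dim → ZMod 2),
    Function.Injective φ ∧ φ '' N.E = M.E ∩ (Set.range φ \ {0})

/-- Isomorphism of binary matroids: a bijective induced embedding. -/
def Iso (M N : BinMatroid) : Prop :=
  ∃ φ : (Fin N.dim → ZMod 2) →ₗ[ZMod 2] (Fin M.dim → ZMod 2),
    Function.Bijective φ ∧ φ '' N.E = M.E ∩ (Set.range φ \ {0})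

/-- The critical number of the induced restriction of the ground set `E` to the flat of
the subspace `F`: the least `k` such that some flat of `F` of dimension `dim F - k`
is disjoint from `E`. -/
noncomputable def critNumRes {n : ℕ} (E : Set (Fin n → ZMod 2))
    (F : Submodule (ZMod 2) (Fin n → ZMod 2)) : ℕ :=
  sInf {k : ℕ | ∃ W : Submodule (ZMod 2) (Fin n → ZMod 2), W ≤ F ∧
    Module.finrank (ZMod 2) W = Module.finrank (ZMod 2) F - k ∧
    Disjoint ((W : Set (Fin n → ZMod 2)) \ {0}) E}

/-- The critical number `χ(M)`: the least `k ≥ 0` such that some flat of dimension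
`n - k` is disjoint from `E`. -/
noncomputable def critNum (M : BinMatroid) : ℕ :=
  sInf {k : ℕ | ∃ W : Submodule (ZMod 2) (Fin M.dim → ZMod 2),
    Module.finrank (ZMod 2) W = M.dim - k ∧
    Disjoint ((W : Set (Fin M.dim → ZMod 2)) \ {0}) M.E}

/-- `M ∈ ℰ_k` : every induced restriction of `M` to a flat of dimension at least `k`
has even size. -/
def MemE (k : ℕ) (M : BinMatroid) : Prop :=
  ∀ W : Submodule (ZMod 2) (Fin M.dim → ZMod 2),
    k ≤ Module.finrank (ZMod 2) W →
    Even (M.E ∩ ((W : Set (Fin M.dim → ZMod 2)) \ {0})).ncard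

/-- `M` is full-rank: `E` spans `𝔽₂ⁿ`. -/
def FullRank (M : BinMatroid) : Prop :=
  Submodule.span (ZMod 2) M.E = ⊤

/-- `M` is (isomorphic to) the doubling of `M₀`: `M₀` is identified, via an injective
linear map `φ`, with the restriction of `M` to a hyperplane `H = range φ`, there is
`w ∈ G − (E ∪ H)`, and `E = (E ∩ H) ∪ (w + (E ∩ H))`. -/
def IsDoublingOf (M M₀ : BinMatroid) : Prop :=
  M.dim = M₀.dim + 1 ∧
  ∃ φ : (Fin M₀.dim → ZMod 2) →ₗ[ZMod 2] (Fin M.dim → ZMod 2),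
    Function.Injective φ ∧
    ∃ w : Fin M.dim → ZMod 2, w ≠ 0 ∧ w ∉ Set.range φ ∧ w ∉ M.E ∧
      M.E = φ '' M₀.E ∪ (fun x => w + x) '' (φ '' M₀.E)

/-- `M` arises from `M₀` by a (possibly empty) sequence of doublings. -/
def ArisesByDoublings (M M₀ : BinMatroid) : Prop :=
  ∃ M' : BinMatroid,
    Relation.ReflTransGen (fun A B => IsDoublingOf B A) M₀ M' ∧ M.Iso M'

/-- `M` is (a copy of) `AG°(t−1, 2)`, the matroid `((G − H) ∪ {x}, G)` with `H` a
hyperplane of `G` and `x ∈ H`, where `t = M.dim`. -/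
def IsAGo (M : BinMatroid) : Prop :=
  ∃ H : Submodule (ZMod 2) (Fin M.dim → ZMod 2),
    Module.finrank (ZMod 2) H + 1 = M.dim ∧
    ∃ x ∈ (H : Set (Fin M.dim → ZMod 2)) \ {0},
      M.E = ({v | v ≠ 0} \ (H : Set (Fin M.dim → ZMod 2))) ∪ {x}

/-- `M` is a Bose–Burton geometry of order `k`: `E = G − F` for a flat `F` of
dimension `n − k`. -/
def IsBoseBurton (M : BinMatroid) (k : ℕ) : Prop :=
  k ≤ M.dim ∧ ∃ W : Submodule (ZMod 2) (Fin M.dim → ZMod 2),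
    Module.finrank (ZMod 2) W = M.dim - k ∧
    M.E = {v | v ≠ 0} \ (W : Set (Fin M.dim → ZMod 2))

/-- The ground set `E` (of a matroid of the ambient dimension `n`) is the semidoubling
of its restriction to the hyperplane `H₁` with respect to the hyperplane `H₀` of `H₁`:
there is `w ∈ G − (E ∪ H₁)` with `|{x, x+w} ∩ E| ∈ {0, 2}` for every `x ∈ H₀` and
`|{x, x+w} ∩ E| = 1` for every `x ∈ H₁ − H₀`. -/
def IsSemidoublingWrt {n : ℕ} (E : Set (Fin n → ZMod 2))
    (H₁ H₀ : Submodule (ZMod 2) (Fin n → ZMod 2)) : Prop :=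
  H₀ ≤ H₁ ∧ Module.finrank (ZMod 2) H₀ + 1 = Module.finrank (ZMod 2) H₁ ∧
  ∃ w : Fin n → ZMod 2, w ≠ 0 ∧ w ∉ H₁ ∧ w ∉ E ∧
    (∀ x ∈ (H₀ : Set (Fin n → ZMod 2)) \ {0},
      (({x, x + w} : Set (Fin n → ZMod 2)) ∩ E).ncard = 0 ∨
      (({x, x + w} : Set (Fin n → ZMod 2)) ∩ E).ncard = 2) ∧
    (∀ x ∈ (H₁ : Set (Fin n → ZMod 2)) \ (H₀ : Set (Fin n → ZMod 2)),
      (({x, x + w} : Set (Fin n → ZMod 2)) ∩ E).ncard = 1)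

/-- The ground set `E` is a semidoubling of its restriction to the hyperplane `H₁`
(with respect to some hyperplane `H₀` of `H₁`). -/
def IsSemidoublingOfRes {n : ℕ} (E : Set (Fin n → ZMod 2))
    (H₁ : Submodule (ZMod 2) (Fin n → ZMod 2)) : Prop :=
  ∃ H₀ : Submodule (ZMod 2) (Fin n → ZMod 2), IsSemidoublingWrt E H₁ H₀

/-- `M` is (isomorphic to) a semidoubling of `M₀`: `M₀` is identified, via an injective
linear map `φ`, with the restriction of `M` to the hyperplane `range φ`, and `M` is a
semidoubling of that restriction. -/
def IsSemidoublingOf (M M₀ : BinMatroid) : Prop :=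
  M.dim = M₀.dim + 1 ∧
  ∃ φ : (Fin M₀.dim → ZMod 2) →ₗ[ZMod 2] (Fin M.dim → ZMod 2),
    Function.Injective φ ∧
    φ '' M₀.E = M.E ∩ (Set.range φ \ {0}) ∧
    IsSemidoublingOfRes M.E (LinearMap.range φ)

/-- `M` arises from `M₀` by a (possibly empty) sequence of semidoublings. -/
def ArisesBySemidoublings (M M₀ : BinMatroid) : Prop :=
  ∃ M' : BinMatroid,
    Relation.ReflTransGen (fun A B => IsSemidoublingOf B A) M₀ M' ∧ M.Iso M'

end BinMatroid

/-- A triangle of `G`: a set `{x, y, z}` of three distinct nonzero vectors with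
`x + y + z = 0`. -/
def IsTriangle {n : ℕ} (T : Set (Fin n → ZMod 2)) : Prop :=
  ∃ x y z : Fin n → ZMod 2, x ≠ 0 ∧ y ≠ 0 ∧ z ≠ 0 ∧
    x ≠ y ∧ x ≠ z ∧ y ≠ z ∧ x + y + z = 0 ∧ T = {x, y, z}

/-- `I₃`, the claw: the 3-dimensional matroid whose ground set is the three standard
basis vectors of `𝔽₂³`. -/
def I3 : BinMatroid where
  dim := 3
  E := Set.range fun i : Fin 3 => (Pi.single i 1 : Fin 3 → ZMod 2)
  zero_not_mem := by
    rintro ⟨i, hi⟩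
    have := congrFun hi i
    simp [Pi.single_eq_same] at this

/-- `F₇`, the Fano plane: the 3-dimensional matroid whose ground set is all of
`𝔽₂³ \ {0}`. -/
def F7 : BinMatroid where
  dim := 3
  E := {v | v ≠ 0}
  zero_not_mem := by simp

/-- `K₅`: the 4-dimensional matroid whose ground set is the set of vectors of Hamming
weight 1 or 2 in `𝔽₂⁴`. -/
def K5 : BinMatroid where
  dim := 4
  E := {v | hammingNorm v = 1 ∨ hammingNorm v = 2}
  zero_not_mem := by
    intro h
    simp only [Set.mem_setOf_eq, hammingNorm_zero] at h
    omega


open Module Submodule Finset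
theorem two0 : (2:ZMod 2) = 0 := by decide
theorem two_cases : ∀ x : ZMod 2, x = 0 ∨ x = 1 := by decide
theorem zadd : ∀ u : ZMod 2, u + u = 0 := by decide
theorem zcancel : ∀ u v : ZMod 2, u + (u + v) = v := by decide
theorem addself {n : ℕ} (x : Fin n → ZMod 2) : x + x = 0 := by
  rw [← two_smul (ZMod 2) x, two0, zero_smul]
theorem cancel1 {n : ℕ} (x y : Fin n → ZMod 2) : x + (x + y) = y := by
  rw [← add_assoc, addself, zero_add]

open Classical in
noncomputable def fE {n : ℕ} (E : Set (Fin n → ZMod 2)) (v : Fin n → ZMod 2) : ZMod 2 :=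
  if v ∈ E then 1 else 0

theorem fE_zero {n : ℕ} {E : Set (Fin n → ZMod 2)} (h0 : 0 ∉ E) : fE E 0 = 0 := by
  simp [fE, h0]

theorem fE_one_iff {n : ℕ} {E : Set (Fin n → ZMod 2)} {x} : fE E x = 1 ↔ x ∈ E := by
  unfold fE; split <;> simp_all

theorem fE_eq_zero_iff {n : ℕ} {E : Set (Fin n → ZMod 2)} {x} : fE E x = 0 ↔ x ∉ E := by
  unfold fE; split <;> simp_all

open Classical in
theorem ncard_inter_finset {n : ℕ} (E : Set (Fin n → ZMod 2)) (s : Finset (Fin n → ZMod 2)) :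
    (E ∩ ↑s).ncard = (s.filter (fun x => x ∈ E)).card := by
  rw [← Set.ncard_coe_finset]
  congr 1
  ext x; simp [Finset.mem_filter, and_comm]

open Classical in
theorem sum_fE {n : ℕ} (E : Set (Fin n → ZMod 2)) (s : Finset (Fin n → ZMod 2)) :
    (∑ x ∈ s, fE E x) = ((s.filter (fun x => x ∈ E)).card : ZMod 2) := by
  rw [← Finset.sum_boole]
  exact Finset.sum_congr rfl fun x _ => by unfold fE; split <;> simp_all

theorem sumZ2 {M : Type*} [AddCommMonoid M] (h : ZMod 2 → M) :
    (∑ x : ZMod 2, h x) = h 0 + h 1 := by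
  rw [show (univ : Finset (ZMod 2)) = {0, 1} by decide]
  rw [Finset.sum_insert (by decide), Finset.sum_singleton]

/-- The equivalence used to enumerate `Fin 3 → ZMod 2`. -/
def eq3 : (ZMod 2 × ZMod 2 × ZMod 2) ≃ (Fin 3 → ZMod 2) where
  toFun p := ![p.1, p.2.1, p.2.2]
  invFun g := (g 0, g 1, g 2)
  left_inv := by decide
  right_inv := by decide

theorem H3_of {n : ℕ} {E : Set (Fin n → ZMod 2)} (h0 : 0 ∉ E)
    (hE : ∀ W : Submodule (ZMod 2) (Fin n → ZMod 2), 3 ≤ finrank (ZMod 2) W →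
      Even ((E ∩ ((W : Set (Fin n → ZMod 2)) \ {0})).ncard)) :
    ∀ a b c, fE E (a+b+c) =
      fE E a + fE E b + fE E c + fE E (a+b) + fE E (a+c) + fE E (b+c) := by
  classical
  intro a b c
  have hf0 := fE_zero h0
  have cancel1 : ∀ x y : Fin n → ZMod 2, x + (x + y) = y := fun x y => by
    rw [← add_assoc, addself, zero_add]
  by_cases ha : a = 0
  · subst ha; simp [hf0, zadd _, zcancel _ _, add_comm, add_left_comm, add_assoc, addself, cancel1]
  by_cases hb : b = 0
  · subst hb; simp [hf0, zadd _, zcancel _ _, add_comm, add_left_comm, add_assoc, addself, cancel1]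
  by_cases hc : c = 0
  · subst hc; simp [hf0, zadd _, zcancel _ _, add_comm, add_left_comm, add_assoc, addself, cancel1]
  by_cases hab : a + b = 0
  · have h2 : b = a := by
      have := congrArg (a + ·) hab; simpa [cancel1] using this
    subst h2
    simp [hf0, zadd _, zcancel _ _, add_comm, add_left_comm, add_assoc, addself, cancel1]
  by_cases hac : a + c = 0
  · have h2 : c = a := by
      have := congrArg (a + ·) hac; simpa [cancel1] using this
    subst h2
    simp [hf0, zadd _, zcancel _ _, add_comm, add_left_comm, add_assoc, addself, cancel1]
  by_cases hbc : b + c = 0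
  · have h2 : c = b := by
      have := congrArg (b + ·) hbc; simpa [cancel1] using this
    subst h2
    simp [hf0, zadd _, zcancel _ _, add_comm, add_left_comm, add_assoc, addself, cancel1]
  by_cases habc : a + b + c = 0
  · have h2 : c = a + b := by
      have := congrArg ((a + b) + ·) habc; simpa [cancel1] using this
    subst h2
    simp [hf0, zadd _, zcancel _ _, add_comm, add_left_comm, add_assoc, addself, cancel1]
  -- hard case
  set ψ : (Fin 3 → ZMod 2) →ₗ[ZMod 2] (Fin n → ZMod 2) :=
    Fintype.linearCombination (ZMod 2) ![a, b, c] with hψdef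
  have hψ : ∀ g : Fin 3 → ZMod 2, ψ g = g 0 • a + g 1 • b + g 2 • c := by
    intro g
    rw [hψdef, Fintype.linearCombination_apply, Fin.sum_univ_three]
    simp
  have hψ0 : ∀ g : Fin 3 → ZMod 2, ψ g = 0 → g = 0 := by
    intro g hg
    rw [hψ g] at hg
    rcases two_cases (g 0) with h0'|h0' <;> rcases two_cases (g 1) with h1'|h1' <;>
      rcases two_cases (g 2) with h2'|h2' <;>
      rw [h0', h1', h2'] at hg <;>
      simp only [zero_smul, one_smul, zero_add, add_zero] at hg
    · funext i; fin_cases i <;> assumption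
    all_goals first
      | exact absurd hg ha | exact absurd hg hb | exact absurd hg hc
      | exact absurd hg hab | exact absurd hg hac | exact absurd hg hbc
      | exact absurd hg habc
  have hinj : Function.Injective ψ := by
    intro g g' h
    have := hψ0 (g - g') (by rw [map_sub, h, sub_self])
    exact sub_eq_zero.mp this
  have hW3 : finrank (ZMod 2) (LinearMap.range ψ) = 3 := by
    rw [LinearMap.finrank_range_of_inj hinj]
    simp [Module.finrank_fin_fun]
  have hEv := hE (LinearMap.range ψ) (by rw [hW3])
  set F : Finset (Fin n → ZMod 2) := ((univ : Finset (Fin 3 → ZMod 2)).erase 0).image ψ with hF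
  have hset : E ∩ ((LinearMap.range ψ : Set (Fin n → ZMod 2)) \ {0}) = E ∩ ↑F := by
    congr 1
    ext x
    simp only [Set.mem_diff, Set.mem_singleton_iff, SetLike.mem_coe, LinearMap.mem_range,
      hF, Finset.coe_image, Set.mem_image, Finset.mem_coe, Finset.mem_erase, Finset.mem_univ,
      and_true]
    constructor
    · rintro ⟨⟨g, rfl⟩, hx⟩
      exact ⟨g, fun hg => hx (by rw [hg, map_zero]), rfl⟩
    · rintro ⟨g, hg, rfl⟩
      exact ⟨⟨g, rfl⟩, fun h => hg (hψ0 g h)⟩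
  rw [hset] at hEv
  rw [ncard_inter_finset] at hEv
  have hcast : ((F.filter (fun x => x ∈ E)).card : ZMod 2) = 0 := by
    rw [ZMod.natCast_eq_zero_iff]
    exact hEv.two_dvd
  rw [← sum_fE] at hcast
  rw [hF, Finset.sum_image (fun g _ g' _ h => hinj h)] at hcast
  have herase : (∑ g ∈ (univ : Finset (Fin 3 → ZMod 2)).erase 0, fE E (ψ g))
      = ∑ g : Fin 3 → ZMod 2, fE E (ψ g) := by
    rw [← Finset.sum_erase_add _ _ (Finset.mem_univ 0), map_zero, hf0, add_zero]
  rw [herase] at hcast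
  have hv : ∀ x y z : ZMod 2, ψ ![x, y, z] = x • a + y • b + z • c := by
    intro x y z; rw [hψ]; simp
  rw [← Equiv.sum_comp eq3 (fun g => fE E (ψ g))] at hcast
  simp only [eq3, Equiv.coe_fn_mk, Fintype.sum_prod_type, sumZ2, hv, zero_smul, one_smul,
    zero_add, add_zero, hf0] at hcast
  linear_combination hcast -
    (fE E a + fE E b + fE E c + fE E (a+b) + fE E (a+c) + fE E (b+c)) * two0

/-- The symmetrized second difference of `f`. -/
def Bf {n : ℕ} (f : (Fin n → ZMod 2) → ZMod 2) (x y : Fin n → ZMod 2) : ZMod 2 :=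
  f (x + y) + f x + f y

section Quad

variable {n : ℕ} {f : (Fin n → ZMod 2) → ZMod 2}

theorem Bf_comm (x y : Fin n → ZMod 2) : Bf f x y = Bf f y x := by
  unfold Bf; rw [add_comm x y]; ring

theorem Bf_self (hf0 : f 0 = 0) (x : Fin n → ZMod 2) : Bf f x x = 0 := by
  unfold Bf; rw [addself, hf0, zero_add, zadd]

theorem Bf_zero_left (hf0 : f 0 = 0) (y : Fin n → ZMod 2) : Bf f 0 y = 0 := by
  unfold Bf; rw [zero_add, hf0, add_zero, zadd]

theorem f_add (x y : Fin n → ZMod 2) : f (x + y) = f x + f y + Bf f x y := by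
  unfold Bf; linear_combination (-(f x) - f y) * two0

theorem f_smul (hf0 : f 0 = 0) (r : ZMod 2) (x : Fin n → ZMod 2) :
    f (r • x) = r * f x := by
  rcases two_cases r with h | h <;> subst h
  · rw [zero_smul, hf0, zero_mul]
  · rw [one_smul, one_mul]

variable (hf0 : f 0 = 0)
variable (hf3 : ∀ a b c, f (a+b+c) = f a + f b + f c + f (a+b) + f (a+c) + f (b+c))

include hf3 in
theorem Bf_add_left (x y z : Fin n → ZMod 2) :
    Bf f (x + y) z = Bf f x z + Bf f y z := by
  unfold Bf; linear_combination hf3 x y z + f (x+y) * two0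

include hf0 hf3 in
theorem Bf_smul_left (r : ZMod 2) (x y : Fin n → ZMod 2) :
    Bf f (r • x) y = r * Bf f x y := by
  rcases two_cases r with h | h <;> subst h
  · rw [zero_smul, Bf_zero_left hf0, zero_mul]
  · rw [one_smul, one_mul]

/-- `Bf f · s` as a linear map. -/
def BL (f : (Fin n → ZMod 2) → ZMod 2) (hf0 : f 0 = 0)
    (hf3 : ∀ a b c, f (a+b+c) = f a + f b + f c + f (a+b) + f (a+c) + f (b+c))
    (s : Fin n → ZMod 2) : (Fin n → ZMod 2) →ₗ[ZMod 2] ZMod 2 where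
  toFun := fun x => Bf f x s
  map_add' := fun x y => Bf_add_left hf3 x y s
  map_smul' := fun r x => Bf_smul_left hf0 hf3 r x s

@[simp] theorem BL_apply (s x : Fin n → ZMod 2) : BL f hf0 hf3 s x = Bf f x s := rfl

include hf0 hf3 in
theorem Bf_sum_left {ι : Type*} (s : Finset ι) (y : ι → ZMod 2) (v : ι → Fin n → ZMod 2)
    (w : Fin n → ZMod 2) :
    Bf f (∑ i ∈ s, y i • v i) w = ∑ i ∈ s, y i * Bf f (v i) w := by
  rw [show Bf f (∑ i ∈ s, y i • v i) w = BL f hf0 hf3 w (∑ i ∈ s, y i • v i) from rfl,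
    map_sum]
  exact Finset.sum_congr rfl fun i _ => by rw [map_smul, smul_eq_mul]; rfl

include hf0 hf3 in
theorem f_expand (y : ℕ → ZMod 2) (v : ℕ → Fin n → ZMod 2) (k : ℕ) :
    f (∑ i ∈ range k, y i • v i) =
      (∑ i ∈ range k, y i * f (v i)) +
        ∑ i ∈ range k, ∑ j ∈ range i, y i * y j * Bf f (v i) (v j) := by
  induction k with
  | zero => simp [hf0]
  | succ k IH =>
    rw [Finset.sum_range_succ (f := fun i => y i • v i),
      f_add (f := f) (∑ i ∈ range k, y i • v i) (y k • v k), IH, f_smul hf0]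
    have hB : Bf f (∑ i ∈ range k, y i • v i) (y k • v k)
        = ∑ j ∈ range k, y k * y j * Bf f (v k) (v j) := by
      rw [Bf_comm, Bf_smul_left hf0 hf3, Bf_comm (f := f) (v k), Bf_sum_left hf0 hf3,
        Finset.mul_sum]
      exact Finset.sum_congr rfl fun j _ => by rw [Bf_comm]; ring
    rw [hB, Finset.sum_range_succ (f := fun i => y i * f (v i)),
      Finset.sum_range_succ (f := fun i => ∑ j ∈ range i, y i * y j * Bf f (v i) (v j))]
    ring

end Quad

section RankFacts
variable {n : ℕ}

theorem finrank_total : finrank (ZMod 2) (Fin n → ZMod 2) = n := by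
  simp [Module.finrank_fin_fun]

theorem ker_codim (L : (Fin n → ZMod 2) →ₗ[ZMod 2] ZMod 2) :
    n ≤ finrank (ZMod 2) (LinearMap.ker L) + 1 := by
  have h := LinearMap.finrank_range_add_finrank_ker L
  rw [finrank_total] at h
  have h2 : finrank (ZMod 2) (LinearMap.range L) ≤ 1 := by
    simpa using Submodule.finrank_le (LinearMap.range L)
  omega

theorem inf_codim (A B : Submodule (ZMod 2) (Fin n → ZMod 2)) :
    finrank (ZMod 2) A + finrank (ZMod 2) B ≤ finrank (ZMod 2) ↥(A ⊓ B) + n := by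
  have h := Submodule.finrank_sup_add_finrank_inf_eq A B
  have h2 : finrank (ZMod 2) ↥(A ⊔ B) ≤ n := by
    have := Submodule.finrank_le (A ⊔ B); rwa [finrank_total] at this
  omega

theorem inf_finset_codim {ι : Type*} [DecidableEq ι] (s : Finset ι)
    (g : ι → Submodule (ZMod 2) (Fin n → ZMod 2)) (d : ℕ)
    (h : ∀ i ∈ s, n ≤ finrank (ZMod 2) ↥(g i) + d) :
    n ≤ finrank (ZMod 2) ↥(s.inf g) + d * s.card := by
  induction s using Finset.induction_on with
  | empty =>
    simp only [Finset.inf_empty, Finset.card_empty, mul_zero, add_zero]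
    rw [show (∅ : Finset ι).inf g = ⊤ from Finset.inf_empty, finrank_top, finrank_total]
  | insert _ _ ha _ =>
    rename_i a s IH
    rw [Finset.inf_insert, Finset.card_insert_of_notMem ha]
    have h1 := h a (Finset.mem_insert_self a s)
    have h2 := IH fun i hi => h i (Finset.mem_insert_of_mem hi)
    have h3 := inf_codim (g a) (s.inf g)
    have h4 : finrank (ZMod 2) ↥(s.inf g) ≤ n := by
      have := Submodule.finrank_le (s.inf g); rwa [finrank_total] at this
    have h5 : finrank (ZMod 2) ↥(g a) ≤ n := by
      have := Submodule.finrank_le (g a); rwa [finrank_total] at this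
    nlinarith
end RankFacts
set_option maxHeartbeats 1000000
section Greedy
variable {n K : ℕ} {f : (Fin n → ZMod 2) → ZMod 2}
variable (hf0 : f 0 = 0)
variable (hf3 : ∀ a b c, f (a+b+c) = f a + f b + f c + f (a+b) + f (a+c) + f (b+c))
variable (hno : ∀ W : Submodule (ZMod 2) (Fin n → ZMod 2),
    n ≤ finrank (ZMod 2) W + K → ∃ x, x ∈ W ∧ x ≠ 0 ∧ f x = 1)

include hf0 hf3 hno in
theorem exists_B_one (Z : Submodule (ZMod 2) (Fin n → ZMod 2))
    (hZ : n + 1 ≤ finrank (ZMod 2) Z + K) :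
    ∃ a b, a ∈ Z ∧ b ∈ Z ∧ Bf f a b = 1 := by
  by_contra hcon
  push_neg at hcon
  have hB0 : ∀ a b, a ∈ Z → b ∈ Z → Bf f a b = 0 := by
    intro a b haZ hbZ
    rcases two_cases (Bf f a b) with h | h
    · exact h
    · exact absurd h (hcon a b haZ hbZ)
  have hFadd : ∀ z w : Z, f ((z : Fin n → ZMod 2) + w) = f z + f w := by
    intro z w
    rw [f_add (f := f), hB0 z w z.2 w.2, add_zero]
  set F : Z →ₗ[ZMod 2] ZMod 2 :=
    { toFun := fun z => f z
      map_add' := fun z w => hFadd z w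
      map_smul' := fun r z => by
        simp only [RingHom.id_apply, smul_eq_mul]
        rw [show ((r • z : Z) : Fin n → ZMod 2) = r • (z : Fin n → ZMod 2) from rfl,
          f_smul hf0] } with hFdef
  set W : Submodule (ZMod 2) (Fin n → ZMod 2) := (LinearMap.ker F).map Z.subtype with hW
  have hWrank : n ≤ finrank (ZMod 2) W + K := by
    have h1 : finrank (ZMod 2) W = finrank (ZMod 2) (LinearMap.ker F) :=
      Submodule.finrank_map_subtype_eq Z _
    have h2 := LinearMap.finrank_range_add_finrank_ker F
    have h3 : finrank (ZMod 2) (LinearMap.range F) ≤ 1 := by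
      simpa using Submodule.finrank_le (LinearMap.range F)
    omega
  obtain ⟨x, hxW, hx0, hx1⟩ := hno W hWrank
  obtain ⟨z, hz, rfl⟩ := hxW
  have : f (z : Fin n → ZMod 2) = 0 := hz
  rw [show Z.subtype z = (z : Fin n → ZMod 2) from rfl, this] at hx1
  exact absurd hx1 (by decide)

include hf0 hf3 in
theorem goodify {Z : Submodule (ZMod 2) (Fin n → ZMod 2)} {a b : Fin n → ZMod 2}
    (haZ : a ∈ Z) (hbZ : b ∈ Z) (hB : Bf f a b = 1) (h : f a = 0 ∨ f b = 0) :
    ∃ u v, u ∈ Z ∧ v ∈ Z ∧ f u = 0 ∧ f v = 0 ∧ Bf f u v = 1 := by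
  rcases two_cases (f a) with ha | ha
  · rcases two_cases (f b) with hb | hb
    · exact ⟨a, b, haZ, hbZ, ha, hb, hB⟩
    · refine ⟨a, a + b, haZ, Z.add_mem haZ hbZ, ha, ?_, ?_⟩
      · rw [f_add (f := f), ha, hb, hB]; decide
      · rw [Bf_comm, Bf_add_left hf3, Bf_self hf0, zero_add, Bf_comm, hB]
  · rcases two_cases (f b) with hb | hb
    · refine ⟨b, a + b, hbZ, Z.add_mem haZ hbZ, hb, ?_, ?_⟩
      · rw [f_add (f := f), ha, hb, hB]; decide
      · rw [Bf_comm, Bf_add_left hf3, Bf_self hf0, add_zero, hB]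
    · rcases h with h | h
      · exact absurd ha (by rw [h]; decide)
      · exact absurd hb (by rw [h]; decide)

include hf0 hf3 hno in
theorem exists_good_pair (Z : Submodule (ZMod 2) (Fin n → ZMod 2))
    (hZ : n + 3 ≤ finrank (ZMod 2) Z + K) :
    ∃ a b, a ∈ Z ∧ b ∈ Z ∧ f a = 0 ∧ f b = 0 ∧ Bf f a b = 1 := by
  obtain ⟨a, b, haZ, hbZ, hB⟩ := exists_B_one hf0 hf3 hno Z (by omega)
  rcases two_cases (f a) with ha | ha
  · exact goodify hf0 hf3 haZ hbZ hB (Or.inl ha)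
  rcases two_cases (f b) with hb | hb
  · exact goodify hf0 hf3 haZ hbZ hB (Or.inr hb)
  -- f a = 1, f b = 1
  set Z' : Submodule (ZMod 2) (Fin n → ZMod 2) :=
    Z ⊓ LinearMap.ker (BL f hf0 hf3 a) ⊓ LinearMap.ker (BL f hf0 hf3 b) with hZ'
  have hZ'rank : n + 1 ≤ finrank (ZMod 2) Z' + K := by
    have h1 := inf_codim Z (LinearMap.ker (BL f hf0 hf3 a))
    have h2 := inf_codim (Z ⊓ LinearMap.ker (BL f hf0 hf3 a)) (LinearMap.ker (BL f hf0 hf3 b))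
    rw [← hZ'] at h2
    have h3 := ker_codim (BL f hf0 hf3 a)
    have h4 := ker_codim (BL f hf0 hf3 b)
    omega
  obtain ⟨a', b', haZ', hbZ', hB'⟩ := exists_B_one hf0 hf3 hno Z' hZ'rank
  rw [hZ'] at haZ' hbZ'
  have hpa := Submodule.mem_inf.mp haZ'
  have hpa1 := Submodule.mem_inf.mp hpa.1
  have hpb := Submodule.mem_inf.mp hbZ'
  have hpb1 := Submodule.mem_inf.mp hpb.1
  have haZ'' := hpa1.1
  have hka := hpa1.2
  have hkb := hpa.2
  have hbZ'' := hpb1.1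
  have hka' := hpb1.2
  have hkb' := hpb.2
  have hBa'a : Bf f a' a = 0 := LinearMap.mem_ker.mp hka
  have hBa'b : Bf f a' b = 0 := LinearMap.mem_ker.mp hkb
  have hBb'a : Bf f b' a = 0 := LinearMap.mem_ker.mp hka'
  have hBb'b : Bf f b' b = 0 := LinearMap.mem_ker.mp hkb'
  rcases two_cases (f a') with ha' | ha'
  · exact goodify hf0 hf3 haZ'' hbZ'' hB' (Or.inl ha')
  rcases two_cases (f b') with hb' | hb'
  · exact goodify hf0 hf3 haZ'' hbZ'' hB' (Or.inr hb')
  -- all of f a, f b, f a', f b' are 1; combine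
  have e1 : Bf f (a + a') b = 1 := by
    rw [Bf_add_left hf3, hB, hBa'b]; decide
  have hu : f (a + a') = 0 := by
    rw [f_add (f := f), ha, ha', Bf_comm, hBa'a]; decide
  refine ⟨a + a', b + (a + a'), Z.add_mem haZ haZ'', Z.add_mem hbZ (Z.add_mem haZ haZ''), hu, ?_, ?_⟩
  · have hBu : Bf f b (a + a') = 1 := by rw [Bf_comm, e1]
    rw [f_add (f := f), hb, hu, hBu]; decide
  · rw [Bf_comm, Bf_add_left hf3, Bf_self hf0, add_zero, Bf_comm, e1]

include hf3 in
theorem exists_notin_zero (Z D : Submodule (ZMod 2) (Fin n → ZMod 2))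
    (hD : finrank (ZMod 2) D + 3 ≤ finrank (ZMod 2) Z) :
    ∃ x, x ∈ Z ∧ x ∉ D ∧ f x = 0 := by
  have pick : ∀ D' : Submodule (ZMod 2) (Fin n → ZMod 2),
      finrank (ZMod 2) D' < finrank (ZMod 2) Z → ∃ x, x ∈ Z ∧ x ∉ D' := by
    intro D' hlt
    by_contra hcon
    push_neg at hcon
    have hle : Z ≤ D' := fun x hx => hcon x hx
    exact absurd (Submodule.finrank_mono hle) (by omega)
  have hsingle : ∀ x : Fin n → ZMod 2,
      finrank (ZMod 2) ↥(Submodule.span (ZMod 2) ({x} : Set (Fin n → ZMod 2))) ≤ 1 := by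
    intro x
    by_cases hx : x = 0
    · subst hx; rw [Submodule.span_zero_singleton]; simp
    · rw [finrank_span_singleton hx]
  obtain ⟨x₁, hx₁Z, hx₁D⟩ := pick D (by omega)
  rcases two_cases (f x₁) with h1 | h1
  · exact ⟨x₁, hx₁Z, hx₁D, h1⟩
  set D₁ := D ⊔ Submodule.span (ZMod 2) {x₁} with hD₁
  have hD₁r : finrank (ZMod 2) D₁ ≤ finrank (ZMod 2) D + 1 := by
    have h1' := Submodule.finrank_add_le_finrank_add_finrank D (Submodule.span (ZMod 2) {x₁})
    rw [← hD₁] at h1'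
    have h2 := hsingle x₁
    omega
  obtain ⟨x₂, hx₂Z, hx₂D⟩ := pick D₁ (by omega)
  rcases two_cases (f x₂) with h2 | h2
  · exact ⟨x₂, hx₂Z, fun h => hx₂D (Submodule.mem_sup_left h), h2⟩
  set D₂ := D₁ ⊔ Submodule.span (ZMod 2) {x₂} with hD₂
  have hD₂r : finrank (ZMod 2) D₂ ≤ finrank (ZMod 2) D + 2 := by
    have h1' := Submodule.finrank_add_le_finrank_add_finrank D₁ (Submodule.span (ZMod 2) {x₂})
    rw [← hD₂] at h1'
    have h2' := hsingle x₂
    omega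
  obtain ⟨x₃, hx₃Z, hx₃D⟩ := pick D₂ (by omega)
  rcases two_cases (f x₃) with h3 | h3
  · exact ⟨x₃, hx₃Z, fun h => hx₃D (Submodule.mem_sup_left (Submodule.mem_sup_left h)), h3⟩
  have hx₁D₁ : x₁ ∈ D₁ := Submodule.mem_sup_right (Submodule.mem_span_singleton_self x₁)
  have hx₁D₂ : x₁ ∈ D₂ := Submodule.mem_sup_left hx₁D₁
  have hx₂D₂ : x₂ ∈ D₂ := Submodule.mem_sup_right (Submodule.mem_span_singleton_self x₂)
  have hDD₂ : D ≤ D₂ := le_trans le_sup_left le_sup_left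
  -- memberships of combinations
  have m12 : x₁ + x₂ ∉ D := fun h => hx₂D (by
    have : x₂ = x₁ + (x₁ + x₂) := (cancel1 x₁ x₂).symm
    rw [this]
    exact D₁.add_mem hx₁D₁ (Submodule.mem_sup_left h))
  have m13 : x₁ + x₃ ∉ D := fun h => hx₃D (by
    have : x₃ = x₁ + (x₁ + x₃) := (cancel1 x₁ x₃).symm
    rw [this]
    exact D₂.add_mem hx₁D₂ (hDD₂ h))
  have m23 : x₂ + x₃ ∉ D := fun h => hx₃D (by
    have : x₃ = x₂ + (x₂ + x₃) := (cancel1 x₂ x₃).symm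
    rw [this]
    exact D₂.add_mem hx₂D₂ (hDD₂ h))
  have m123 : x₁ + x₂ + x₃ ∉ D := fun h => hx₃D (by
    have : x₃ = (x₁ + x₂) + (x₁ + x₂ + x₃) := (cancel1 (x₁ + x₂) x₃).symm
    rw [this]
    exact D₂.add_mem (D₂.add_mem hx₁D₂ hx₂D₂) (hDD₂ h))
  rcases two_cases (f (x₁ + x₂)) with h12 | h12
  · exact ⟨x₁ + x₂, Z.add_mem hx₁Z hx₂Z, m12, h12⟩
  rcases two_cases (f (x₁ + x₃)) with h13 | h13
  · exact ⟨x₁ + x₃, Z.add_mem hx₁Z hx₃Z, m13, h13⟩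
  rcases two_cases (f (x₂ + x₃)) with h23 | h23
  · exact ⟨x₂ + x₃, Z.add_mem hx₂Z hx₃Z, m23, h23⟩
  rcases two_cases (f (x₁ + x₂ + x₃)) with h123 | h123
  · exact ⟨x₁ + x₂ + x₃, Z.add_mem (Z.add_mem hx₁Z hx₂Z) hx₃Z, m123, h123⟩
  have := hf3 x₁ x₂ x₃
  rw [h1, h2, h3, h12, h13, h23, h123] at this
  exact absurd this (by decide)

end Greedy
section Build
variable {n K : ℕ} {f : (Fin n → ZMod 2) → ZMod 2}
variable (hf0 : f 0 = 0)
variable (hf3 : ∀ a b c, f (a+b+c) = f a + f b + f c + f (a+b) + f (a+c) + f (b+c))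
variable (hno : ∀ W : Submodule (ZMod 2) (Fin n → ZMod 2),
    n ≤ finrank (ZMod 2) W + K → ∃ x, x ∈ W ∧ x ≠ 0 ∧ f x = 1)

theorem inf_two_kers (L1 L2 : (Fin n → ZMod 2) →ₗ[ZMod 2] ZMod 2) :
    n ≤ finrank (ZMod 2) ↥(LinearMap.ker L1 ⊓ LinearMap.ker L2) + 2 := by
  have h1 := ker_codim L1
  have h2 := ker_codim L2
  have h3 := inf_codim (LinearMap.ker L1) (LinearMap.ker L2)
  have h4 : finrank (ZMod 2) ↥(LinearMap.ker L1) ≤ n := by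
    have := Submodule.finrank_le (LinearMap.ker L1); rwa [finrank_total] at this
  omega

/-- The ambient orthogonality space for a family of pairs. -/
noncomputable def Zab (hf0 : f 0 = 0)
    (hf3 : ∀ a b c, f (a+b+c) = f a + f b + f c + f (a+b) + f (a+c) + f (b+c))
    (a b : ℕ → Fin n → ZMod 2) (j : ℕ) : Submodule (ZMod 2) (Fin n → ZMod 2) :=
  (Finset.range j).inf (fun t =>
    LinearMap.ker (BL f hf0 hf3 (a t)) ⊓ LinearMap.ker (BL f hf0 hf3 (b t)))

include hf0 hf3 in
theorem Zab_rank (a b : ℕ → Fin n → ZMod 2) (j : ℕ) :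
    n ≤ finrank (ZMod 2) (Zab hf0 hf3 a b j) + 2 * j := by
  have := inf_finset_codim (Finset.range j)
    (fun t => LinearMap.ker (BL f hf0 hf3 (a t)) ⊓ LinearMap.ker (BL f hf0 hf3 (b t))) 2
    (fun t _ => inf_two_kers _ _)
  rw [Finset.card_range] at this
  exact this

include hf0 hf3 in
theorem Zab_le (a b : ℕ → Fin n → ZMod 2) (j t : ℕ) (ht : t < j) (x : Fin n → ZMod 2)
    (hx : x ∈ Zab hf0 hf3 a b j) : Bf f x (a t) = 0 ∧ Bf f x (b t) = 0 := by
  have hle := Finset.inf_le (f := fun t =>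
    LinearMap.ker (BL f hf0 hf3 (a t)) ⊓ LinearMap.ker (BL f hf0 hf3 (b t)))
    (Finset.mem_range.mpr ht)
  have := hle hx
  have h1 := (Submodule.mem_inf.mp this).1
  have h2 := (Submodule.mem_inf.mp this).2
  exact ⟨LinearMap.mem_ker.mp h1, LinearMap.mem_ker.mp h2⟩

include hf0 hf3 hno in
theorem exists_pairs (m : ℕ) (hK : 2 * m + 3 ≤ K) :
    ∃ a b : ℕ → Fin n → ZMod 2,
      (∀ t < m, f (a t) = 0 ∧ f (b t) = 0 ∧ Bf f (a t) (b t) = 1) ∧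
      (∀ s < m, ∀ t < m, s ≠ t → Bf f (a s) (a t) = 0 ∧ Bf f (a s) (b t) = 0 ∧
        Bf f (b s) (a t) = 0 ∧ Bf f (b s) (b t) = 0) := by
  suffices h : ∀ j, j ≤ m → ∃ a b : ℕ → Fin n → ZMod 2,
      (∀ t < j, f (a t) = 0 ∧ f (b t) = 0 ∧ Bf f (a t) (b t) = 1) ∧
      (∀ s < j, ∀ t < j, s ≠ t → Bf f (a s) (a t) = 0 ∧ Bf f (a s) (b t) = 0 ∧
        Bf f (b s) (a t) = 0 ∧ Bf f (b s) (b t) = 0) by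
    exact h m le_rfl
  intro j
  induction j with
  | zero =>
    exact fun _ => ⟨fun _ => 0, fun _ => 0, fun t ht => absurd ht (by omega),
      fun s hs => absurd hs (by omega)⟩
  | succ j IH =>
    intro hj
    obtain ⟨a, b, h1, h2⟩ := IH (by omega)
    have hZr := Zab_rank hf0 hf3 a b j
    obtain ⟨u, v, huZ, hvZ, hfu, hfv, hBuv⟩ :=
      exists_good_pair hf0 hf3 hno (Zab hf0 hf3 a b j) (by omega)
    set a' : ℕ → Fin n → ZMod 2 := fun t => if t = j then u else a t with ha'
    set b' : ℕ → Fin n → ZMod 2 := fun t => if t = j then v else b t with hb'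
    have ha'j : a' j = u := by simp [ha']
    have hb'j : b' j = v := by simp [hb']
    have ha'lt : ∀ t, t ≠ j → a' t = a t := fun t ht => by simp [ha', ht]
    have hb'lt : ∀ t, t ≠ j → b' t = b t := fun t ht => by simp [hb', ht]
    refine ⟨a', b', ?_, ?_⟩
    · intro t ht
      by_cases htj : t = j
      · rw [htj, ha'j, hb'j]; exact ⟨hfu, hfv, hBuv⟩
      · rw [ha'lt t htj, hb'lt t htj]; exact h1 t (by omega)
    · intro s hs t ht hst
      by_cases hsj : s = j
      · have htj : t ≠ j := fun h => hst (by rw [hsj, h])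
        have ht' : t < j := by omega
        rw [hsj, ha'j, hb'j, ha'lt t htj, hb'lt t htj]
        obtain ⟨hu1, hu2⟩ := Zab_le hf0 hf3 a b j t ht' u huZ
        obtain ⟨hv1, hv2⟩ := Zab_le hf0 hf3 a b j t ht' v hvZ
        exact ⟨hu1, hu2, hv1, hv2⟩
      · by_cases htj : t = j
        · have hs' : s < j := by omega
          rw [htj, ha'j, hb'j, ha'lt s hsj, hb'lt s hsj]
          obtain ⟨hu1, hu2⟩ := Zab_le hf0 hf3 a b j s hs' u huZ
          obtain ⟨hv1, hv2⟩ := Zab_le hf0 hf3 a b j s hs' v hvZ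
          rw [Bf_comm (f := f) (a s) u, Bf_comm (f := f) (a s) v,
            Bf_comm (f := f) (b s) u, Bf_comm (f := f) (b s) v]
          exact ⟨hu1, hv1, hu2, hv2⟩
        · rw [ha'lt s hsj, hb'lt s hsj, ha'lt t htj, hb'lt t htj]
          exact h2 s (by omega) t (by omega) hst
end Build
section BuildC
variable {n K : ℕ} {f : (Fin n → ZMod 2) → ZMod 2}
variable (hf0 : f 0 = 0)
variable (hf3 : ∀ a b c, f (a+b+c) = f a + f b + f c + f (a+b) + f (a+c) + f (b+c))

/-- The finite generating set used in the independence condition for the `c` family. -/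
def SF (a b c : ℕ → Fin n → ZMod 2) (m i : ℕ) : Finset (Fin n → ZMod 2) :=
  ((Finset.range m).image a ∪ (Finset.range m).image b) ∪ (Finset.range i).image c

theorem SF_congr {a b c c' : ℕ → Fin n → ZMod 2} {m i : ℕ}
    (h : ∀ t < i, c t = c' t) : SF a b c m i = SF a b c' m i := by
  unfold SF
  congr 1
  exact Finset.image_congr fun t ht => h t (Finset.mem_range.mp ht)

theorem SF_card (a b c : ℕ → Fin n → ZMod 2) (m i : ℕ) :
    (SF a b c m i).card ≤ 2 * m + i := by
  unfold SF
  calc (((Finset.range m).image a ∪ (Finset.range m).image b) ∪ (Finset.range i).image c).card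
      ≤ (((Finset.range m).image a ∪ (Finset.range m).image b)).card
        + ((Finset.range i).image c).card := Finset.card_union_le _ _
    _ ≤ (((Finset.range m).image a).card + ((Finset.range m).image b).card)
        + ((Finset.range i).image c).card := by
        have := Finset.card_union_le ((Finset.range m).image a) ((Finset.range m).image b)
        omega
    _ ≤ (m + m) + i := by
        have h1 := Finset.card_image_le (s := Finset.range m) (f := a)
        have h2 := Finset.card_image_le (s := Finset.range m) (f := b)
        have h3 := Finset.card_image_le (s := Finset.range i) (f := c)
        simp only [Finset.card_range] at h1 h2 h3
        omega
    _ ≤ 2 * m + i := by omega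

include hf0 hf3 in
theorem exists_cs (m : ℕ) (hn : 6 * m + 3 ≤ n) (a b : ℕ → Fin n → ZMod 2)
    (hab : ∀ s < m, ∀ t < m, s ≠ t → Bf f (a s) (a t) = 0 ∧ Bf f (a s) (b t) = 0 ∧
      Bf f (b s) (a t) = 0 ∧ Bf f (b s) (b t) = 0) :
    ∃ c : ℕ → Fin n → ZMod 2,
      (∀ i < m, f (c i) = 0) ∧
      (∀ i < m, ∀ t < m, Bf f (c i) (a t) = 0 ∧ Bf f (c i) (b t) = 0) ∧
      (∀ i < m, ∀ i' < m, i ≠ i' → Bf f (c i) (c i') = 0) ∧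
      (∀ i < m, c i ∉ Submodule.span (ZMod 2) (↑(SF a b c m i) : Set (Fin n → ZMod 2))) := by
  suffices h : ∀ j, j ≤ m → ∃ c : ℕ → Fin n → ZMod 2,
      (∀ i < j, f (c i) = 0) ∧
      (∀ i < j, ∀ t < m, Bf f (c i) (a t) = 0 ∧ Bf f (c i) (b t) = 0) ∧
      (∀ i < j, ∀ i' < j, i ≠ i' → Bf f (c i) (c i') = 0) ∧
      (∀ i < j, c i ∉ Submodule.span (ZMod 2) (↑(SF a b c m i) : Set (Fin n → ZMod 2))) by
    exact h m le_rfl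
  intro j
  induction j with
  | zero =>
    exact fun _ => ⟨fun _ => 0, fun i hi => absurd hi (by omega), fun i hi => absurd hi (by omega),
      fun i hi => absurd hi (by omega), fun i hi => absurd hi (by omega)⟩
  | succ j IH =>
    intro hj
    obtain ⟨c, hc1, hc2, hc3, hc4⟩ := IH (by omega)
    set Z : Submodule (ZMod 2) (Fin n → ZMod 2) :=
      Zab hf0 hf3 a b m ⊓ (Finset.range j).inf (fun i => LinearMap.ker (BL f hf0 hf3 (c i)))
      with hZdef
    have hZrank : n ≤ finrank (ZMod 2) Z + (2 * m + j) := by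
      have h1 := Zab_rank hf0 hf3 a b m
      have h2 := inf_finset_codim (Finset.range j)
        (fun i => LinearMap.ker (BL f hf0 hf3 (c i))) 1 (fun i _ => ker_codim _)
      rw [Finset.card_range] at h2
      have h3 := inf_codim (Zab hf0 hf3 a b m)
        ((Finset.range j).inf (fun i => LinearMap.ker (BL f hf0 hf3 (c i))))
      rw [← hZdef] at h3
      have h4 : finrank (ZMod 2) (Zab hf0 hf3 a b m) ≤ n := by
        have := Submodule.finrank_le (Zab hf0 hf3 a b m); rwa [finrank_total] at this
      have h5 : finrank (ZMod 2)
          ↥((Finset.range j).inf (fun i => LinearMap.ker (BL f hf0 hf3 (c i)))) ≤ n := by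
        have := Submodule.finrank_le
          ((Finset.range j).inf (fun i => LinearMap.ker (BL f hf0 hf3 (c i))))
        rwa [finrank_total] at this
      omega
    set D : Submodule (ZMod 2) (Fin n → ZMod 2) :=
      Submodule.span (ZMod 2) (↑(SF a b c m j) : Set (Fin n → ZMod 2)) with hDdef
    have hDrank : finrank (ZMod 2) D ≤ 2 * m + j := by
      have h1 := finrank_span_finset_le_card (R := ZMod 2) (SF a b c m j)
      have h2 := SF_card a b c m j
      rw [Set.finrank] at h1
      rw [← hDdef] at h1
      omega
    obtain ⟨x, hxZ, hxD, hfx⟩ := exists_notin_zero hf3 Z D (by omega)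
    rw [hZdef] at hxZ
    have hxZab := (Submodule.mem_inf.mp hxZ).1
    have hxZc := (Submodule.mem_inf.mp hxZ).2
    set c' : ℕ → Fin n → ZMod 2 := fun i => if i = j then x else c i with hc'
    have hc'j : c' j = x := by simp [hc']
    have hc'lt : ∀ i, i ≠ j → c' i = c i := fun i hi => by simp [hc', hi]
    have hc'lt' : ∀ i, i < j → c' i = c i := fun i hi => hc'lt i (by omega)
    refine ⟨c', ?_, ?_, ?_, ?_⟩
    · intro i hi
      by_cases hij : i = j
      · rw [hij, hc'j]; exact hfx
      · rw [hc'lt i hij]; exact hc1 i (by omega)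
    · intro i hi t ht
      by_cases hij : i = j
      · rw [hij, hc'j]
        exact Zab_le hf0 hf3 a b m t ht x hxZab
      · rw [hc'lt i hij]; exact hc2 i (by omega) t ht
    · intro i hi i' hi' hii'
      by_cases hij : i = j
      · have hi'j : i' ≠ j := fun h => hii' (by rw [hij, h])
        have hi'' : i' < j := by omega
        rw [hij, hc'j, hc'lt i' hi'j]
        have hle := Finset.inf_le (f := fun i => LinearMap.ker (BL f hf0 hf3 (c i)))
          (Finset.mem_range.mpr hi'')
        exact LinearMap.mem_ker.mp (hle hxZc)
      · by_cases hi'j : i' = j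
        · have hi'' : i < j := by omega
          rw [hi'j, hc'j, hc'lt i hij]
          have hle := Finset.inf_le (f := fun i => LinearMap.ker (BL f hf0 hf3 (c i)))
            (Finset.mem_range.mpr hi'')
          rw [Bf_comm]
          exact LinearMap.mem_ker.mp (hle hxZc)
        · rw [hc'lt i hij, hc'lt i' hi'j]
          exact hc3 i (by omega) i' (by omega) hii'
    · intro i hi
      have hSF : SF a b c' m i = SF a b c m i := by
        exact SF_congr fun t ht => hc'lt t (by omega)
      by_cases hij : i = j
      · rw [hij, hc'j]
        rw [show SF a b c' m j = SF a b c m j from SF_congr fun t ht => hc'lt t (by omega)]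
        exact hxD
      · rw [hc'lt i hij, hSF]
        exact hc4 i (by omega)
end BuildC
section WFam
variable {n : ℕ} {f : (Fin n → ZMod 2) → ZMod 2}
variable (hf0 : f 0 = 0)
variable (hf3 : ∀ a b c, f (a+b+c) = f a + f b + f c + f (a+b) + f (a+c) + f (b+c))
variable {m : ℕ} {a b c : ℕ → Fin n → ZMod 2} {lam : ℕ → ZMod 2} {mu : ℕ → ℕ → ZMod 2}

/-- The embedded basis vectors. -/
def wv (a b c : ℕ → Fin n → ZMod 2) (lam : ℕ → ZMod 2) (mu : ℕ → ℕ → ZMod 2) (i : ℕ) :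
    Fin n → ZMod 2 :=
  (a i + lam i • b i + ∑ t ∈ Finset.range i, mu t i • b t) + c i

section Props
variable (hpair : ∀ t < m, f (a t) = 0 ∧ f (b t) = 0 ∧ Bf f (a t) (b t) = 1)
variable (horth : ∀ s < m, ∀ t < m, s ≠ t → Bf f (a s) (a t) = 0 ∧ Bf f (a s) (b t) = 0 ∧
    Bf f (b s) (a t) = 0 ∧ Bf f (b s) (b t) = 0)
variable (hcf : ∀ i < m, f (c i) = 0)
variable (hcab : ∀ i < m, ∀ t < m, Bf f (c i) (a t) = 0 ∧ Bf f (c i) (b t) = 0)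
variable (hcc : ∀ i < m, ∀ i' < m, i ≠ i' → Bf f (c i) (c i') = 0)

include hf0 hf3 in
theorem Bf_w_x (j : ℕ) (x : Fin n → ZMod 2) :
    Bf f (wv a b c lam mu j) x = (Bf f (a j) x + lam j * Bf f (b j) x
      + ∑ t ∈ Finset.range j, mu t j * Bf f (b t) x) + Bf f (c j) x := by
  unfold wv
  rw [Bf_add_left hf3, Bf_add_left hf3, Bf_add_left hf3, Bf_smul_left hf0 hf3,
    Bf_sum_left hf0 hf3]

include hf0 hf3 hpair horth hcab in
theorem Bf_b_w (t j : ℕ) (ht : t < m) (hj : j < m) :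
    Bf f (b t) (wv a b c lam mu j) = if t = j then 1 else 0 := by
  rw [Bf_comm, Bf_w_x hf0 hf3]
  have h1 : Bf f (a j) (b t) = if t = j then 1 else 0 := by
    by_cases htj : t = j
    · rw [if_pos htj, htj]; exact (hpair j hj).2.2
    · rw [if_neg htj]; exact (horth j hj t ht (fun h => htj h.symm)).2.1
  have h2 : Bf f (b j) (b t) = 0 := by
    by_cases htj : t = j
    · rw [htj]; exact Bf_self hf0 (b j)
    · exact (horth j hj t ht (fun h => htj h.symm)).2.2.2
  have h3 : ∀ s, s < j → Bf f (b s) (b t) = 0 := by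
    intro s hs
    by_cases hst : s = t
    · rw [hst]; exact Bf_self hf0 (b t)
    · exact (horth s (by omega) t ht hst).2.2.2
  have h4 : Bf f (c j) (b t) = 0 := (hcab j hj t ht).2
  rw [h1, h2, h4, mul_zero, add_zero, add_zero]
  rw [Finset.sum_eq_zero fun s hs => by rw [h3 s (Finset.mem_range.mp hs), mul_zero]]
  rw [add_zero]

include hf0 hf3 horth hcab in
theorem Bf_a_w (i j : ℕ) (hi : i < m) (hj : j < m) (hji : j < i) :
    Bf f (a i) (wv a b c lam mu j) = 0 := by
  rw [Bf_comm, Bf_w_x hf0 hf3]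
  have hij : j ≠ i := by omega
  rw [(horth j hj i hi hij).1, (horth j hj i hi hij).2.2.1, (hcab j hj i hi).1, mul_zero]
  rw [Finset.sum_eq_zero fun s hs => by
    rw [(horth s (by have := Finset.mem_range.mp hs; omega) i hi (by
      have := Finset.mem_range.mp hs; omega)).2.2.1, mul_zero]]
  simp

include hf0 hf3 hcab hcc in
theorem Bf_c_w (i j : ℕ) (hi : i < m) (hj : j < m) (hij : i ≠ j) :
    Bf f (c i) (wv a b c lam mu j) = 0 := by
  rw [Bf_comm, Bf_w_x hf0 hf3]
  rw [Bf_comm (f := f) (a j), (hcab i hi j hj).1,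
    Bf_comm (f := f) (b j), (hcab i hi j hj).2, mul_zero]
  rw [Finset.sum_eq_zero fun s hs => by
    rw [Bf_comm (f := f) (b s), (hcab i hi s (by
      have := Finset.mem_range.mp hs; omega)).2, mul_zero]]
  rw [hcc j hj i hi (fun h => hij h.symm)]
  simp

include hf0 hf3 hpair horth hcf hcab in
theorem f_w (i : ℕ) (hi : i < m) : f (wv a b c lam mu i) = lam i := by
  unfold wv
  have hA : f (a i + lam i • b i) = lam i := by
    rw [f_add (f := f), f_smul hf0, (hpair i hi).1, (hpair i hi).2.1, Bf_comm,
      Bf_smul_left hf0 hf3, Bf_comm, (hpair i hi).2.2]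
    ring
  have hS : f (∑ t ∈ Finset.range i, mu t i • b t) = 0 := by
    rw [f_expand hf0 hf3]
    rw [Finset.sum_eq_zero fun t ht => by
      rw [(hpair t (by have := Finset.mem_range.mp ht; omega)).2.1, mul_zero]]
    rw [Finset.sum_eq_zero fun t ht => Finset.sum_eq_zero fun s hs => by
      have ht' := Finset.mem_range.mp ht
      have hs' := Finset.mem_range.mp hs
      rw [(horth t (by omega) s (by omega) (by omega)).2.2.2, mul_zero]]
    simp
  have hBAS : Bf f (a i + lam i • b i) (∑ t ∈ Finset.range i, mu t i • b t) = 0 := by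
    rw [Bf_comm, Bf_sum_left hf0 hf3]
    refine Finset.sum_eq_zero fun t ht => ?_
    have ht' := Finset.mem_range.mp ht
    rw [Bf_comm, Bf_add_left hf3, Bf_smul_left hf0 hf3,
      (horth i hi t (by omega) (by omega)).2.1,
      (horth i hi t (by omega) (by omega)).2.2.2]
    ring
  have hBc : Bf f (a i + lam i • b i + ∑ t ∈ Finset.range i, mu t i • b t) (c i) = 0 := by
    rw [Bf_add_left hf3, Bf_add_left hf3, Bf_smul_left hf0 hf3,
      Bf_comm (f := f) (a i), (hcab i hi i hi).1,
      Bf_comm (f := f) (b i), (hcab i hi i hi).2, mul_zero]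
    rw [Bf_sum_left hf0 hf3]
    rw [Finset.sum_eq_zero fun t ht => by
      rw [Bf_comm (f := f) (b t), (hcab i hi t (by
        have := Finset.mem_range.mp ht; omega)).2, mul_zero]]
    simp
  rw [f_add (f := f) _ (c i), f_add (f := f) _ (∑ t ∈ Finset.range i, mu t i • b t),
    hA, hS, hBAS, hcf i hi, hBc]
  ring

include hf0 hf3 hpair horth hcf hcab hcc in
theorem Bf_w_w (j i : ℕ) (hj : j < i) (hi : i < m) :
    Bf f (wv a b c lam mu i) (wv a b c lam mu j) = mu j i := by
  have hjm : j < m := by omega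
  rw [Bf_w_x hf0 hf3]
  rw [Bf_a_w hf0 hf3 horth hcab i j hi hjm hj]
  rw [Bf_b_w hf0 hf3 hpair horth hcab i j hi hjm, if_neg (by omega : ¬ i = j), mul_zero]
  rw [Bf_c_w hf0 hf3 hcab hcc i j hi hjm (by omega)]
  have : ∀ t ∈ Finset.range i, mu t i * Bf f (b t) (wv a b c lam mu j)
      = if t = j then mu t i else 0 := by
    intro t ht
    rw [Bf_b_w hf0 hf3 hpair horth hcab t j (by
      have := Finset.mem_range.mp ht; omega) hjm]
    split <;> ring
  rw [Finset.sum_congr rfl this, Finset.sum_ite_eq' (Finset.range i) j (fun t => mu t i),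
    if_pos (Finset.mem_range.mpr hj)]
  ring
end Props
end WFam

theorem char2_eq_of_add_eq_zero {n : ℕ} {x y : Fin n → ZMod 2} (h : x + y = 0) : y = x := by
  have h2 := congrArg (fun z => x + z) h
  simpa [cancel1] using h2

theorem main_embed (M N : BinMatroid) (hM3 : M.MemE 3) (hN3 : N.MemE 3)
    (hcrit : 6 * N.dim + 10 < M.critNum) : M.HasIR N := by
  classical
  obtain ⟨hf0, hf3⟩ : fE M.E 0 = 0 ∧ ∀ a b c, fE M.E (a+b+c) =
      fE M.E a + fE M.E b + fE M.E c + fE M.E (a+b) + fE M.E (a+c) + fE M.E (b+c) :=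
    ⟨fE_zero M.zero_not_mem, H3_of M.zero_not_mem hM3⟩
  obtain ⟨hg0, hg3⟩ : fE N.E 0 = 0 ∧ ∀ a b c, fE N.E (a+b+c) =
      fE N.E a + fE N.E b + fE N.E c + fE N.E (a+b) + fE N.E (a+c) + fE N.E (b+c) :=
    ⟨fE_zero N.zero_not_mem, H3_of N.zero_not_mem hN3⟩
  have hdim_le : M.critNum ≤ M.dim := by
    apply Nat.sInf_le
    refine ⟨⊥, by simp [finrank_bot], ?_⟩
    have : ((⊥ : Submodule (ZMod 2) (Fin M.dim → ZMod 2)) : Set (Fin M.dim → ZMod 2)) \ {0}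
        = ∅ := by simp
    rw [this]
    exact Set.empty_disjoint _
  have hKn : 6 * N.dim + 10 < M.dim := lt_of_lt_of_le hcrit hdim_le
  have hno : ∀ W : Submodule (ZMod 2) (Fin M.dim → ZMod 2),
      M.dim ≤ finrank (ZMod 2) W + (6 * N.dim + 10) →
      ∃ x, x ∈ W ∧ x ≠ 0 ∧ fE M.E x = 1 := by
    intro W hW
    by_contra hcon
    push_neg at hcon
    have hdis : Disjoint ((W : Set (Fin M.dim → ZMod 2)) \ {0}) M.E := by
      rw [Set.disjoint_left]
      intro x hx hxE
      exact hcon x hx.1 (by simpa using hx.2) (fE_one_iff.mpr hxE)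
    have hWle : finrank (ZMod 2) W ≤ M.dim := by
      have := Submodule.finrank_le W; rwa [finrank_total] at this
    have hmem : (M.dim - finrank (ZMod 2) W) ∈ {k : ℕ |
        ∃ W' : Submodule (ZMod 2) (Fin M.dim → ZMod 2),
        finrank (ZMod 2) W' = M.dim - k ∧
        Disjoint ((W' : Set (Fin M.dim → ZMod 2)) \ {0}) M.E} :=
      ⟨W, by omega, hdis⟩
    have := Nat.sInf_le hmem
    have : M.critNum ≤ M.dim - finrank (ZMod 2) W := this
    omega
  obtain ⟨a, b, hpair, horth⟩ := exists_pairs hf0 hf3 hno N.dim (by omega)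
  obtain ⟨c, hcf, hcab', hcc, hc4⟩ := exists_cs hf0 hf3 N.dim (by omega) a b horth
  have hcab : ∀ i < N.dim, ∀ t < N.dim,
      Bf (fE M.E) (c i) (a t) = 0 ∧ Bf (fE M.E) (c i) (b t) = 0 := hcab'
  -- target data
  set eV : ℕ → Fin N.dim → ZMod 2 := fun i k => if (k : ℕ) = i then 1 else 0 with heV
  set lam : ℕ → ZMod 2 := fun i => fE N.E (eV i) with hlam
  set mu : ℕ → ℕ → ZMod 2 := fun t i => Bf (fE N.E) (eV t) (eV i) with hmu
  set w : ℕ → Fin M.dim → ZMod 2 := wv a b c lam mu with hw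
  set φ : (Fin N.dim → ZMod 2) →ₗ[ZMod 2] (Fin M.dim → ZMod 2) :=
    Fintype.linearCombination (ZMod 2) (fun i : Fin N.dim => w (i : ℕ)) with hφ
  have hy' : ∀ y : Fin N.dim → ZMod 2, ∀ i : Fin N.dim,
      (fun t : ℕ => if h : t < N.dim then y ⟨t, h⟩ else 0) (i : ℕ) = y i := by
    intro y i
    simp [i.isLt]
  have hphi : ∀ y : Fin N.dim → ZMod 2,
      φ y = ∑ i ∈ Finset.range N.dim,
        (fun t : ℕ => if h : t < N.dim then y ⟨t, h⟩ else 0) i • w i := by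
    intro y
    rw [hφ, Fintype.linearCombination_apply,
      ← Fin.sum_univ_eq_sum_range (fun i =>
        (fun t : ℕ => if h : t < N.dim then y ⟨t, h⟩ else 0) i • w i) N.dim]
    exact Finset.sum_congr rfl fun i _ => by rw [hy' y i]
  have hyrep : ∀ y : Fin N.dim → ZMod 2,
      y = ∑ i ∈ Finset.range N.dim,
        (fun t : ℕ => if h : t < N.dim then y ⟨t, h⟩ else 0) i • eV i := by
    intro y
    funext k
    rw [Finset.sum_apply]
    have : ∀ i ∈ Finset.range N.dim,
        ((fun t : ℕ => if h : t < N.dim then y ⟨t, h⟩ else 0) i • eV i) k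
          = if (k : ℕ) = i then (fun t : ℕ => if h : t < N.dim then y ⟨t, h⟩ else 0) i
            else 0 := by
      intro i _
      by_cases hki : (k : ℕ) = i <;> simp [heV, hki]
    rw [Finset.sum_congr rfl this, Finset.sum_ite_eq (Finset.range N.dim) (k : ℕ)
      (fun t : ℕ => if h : t < N.dim then y ⟨t, h⟩ else 0), if_pos (Finset.mem_range.mpr k.isLt)]
    simp [k.isLt]
  have hkey : ∀ y : Fin N.dim → ZMod 2, fE M.E (φ y) = fE N.E y := by
    intro y
    set y' : ℕ → ZMod 2 := fun t => if h : t < N.dim then y ⟨t, h⟩ else 0 with hy'def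
    rw [hphi y, f_expand hf0 hf3]
    conv_rhs => rw [hyrep y]
    rw [f_expand hg0 hg3]
    congr 1
    · refine Finset.sum_congr rfl fun i hi => ?_
      rw [f_w hf0 hf3 hpair horth hcf hcab i (Finset.mem_range.mp hi), hlam]
    · refine Finset.sum_congr rfl fun i hi => Finset.sum_congr rfl fun j hj => ?_
      have hi' := Finset.mem_range.mp hi
      have hj' := Finset.mem_range.mp hj
      rw [Bf_w_w hf0 hf3 hpair horth hcf hcab hcc j i hj' hi', hmu, Bf_comm]
  have hker : ∀ y : Fin N.dim → ZMod 2, φ y = 0 → y = 0 := by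
    intro y h0
    by_contra hy0
    obtain ⟨i1, hi1⟩ := Function.ne_iff.mp hy0
    simp only [Pi.zero_apply] at hi1
    set T : Finset (Fin N.dim) := Finset.univ.filter (fun i => y i ≠ 0) with hT
    have hi1T : i1 ∈ T := by simp [hT, hi1]
    set i0 : Fin N.dim := T.max' ⟨i1, hi1T⟩ with hi0
    have hi0T : i0 ∈ T := T.max'_mem ⟨i1, hi1T⟩
    have hy1 : ∀ i ∈ T, y i = 1 := by
      intro i hi
      rcases two_cases (y i) with h | h
      · exact absurd h (by simpa [hT] using hi)
      · exact h
    have hsum0 : ∑ i ∈ T, w (i : ℕ) = 0 := by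
      have h1 : ∑ i : Fin N.dim, y i • w (i : ℕ) = 0 := by
        have h0' := h0
        rw [hφ, Fintype.linearCombination_apply] at h0'
        simpa using h0'
      have h2 : ∑ i ∈ T, y i • w (i : ℕ) = ∑ i : Fin N.dim, y i • w (i : ℕ) := by
        rw [hT]
        refine Finset.sum_filter_of_ne fun i _ hne => ?_
        intro hyi
        rw [hyi, zero_smul] at hne
        exact hne rfl
      calc ∑ i ∈ T, w (i : ℕ) = ∑ i ∈ T, y i • w (i : ℕ) :=
            (Finset.sum_congr rfl fun i hi => by rw [hy1 i hi, one_smul]).symm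
        _ = ∑ i : Fin N.dim, y i • w (i : ℕ) := h2
        _ = 0 := h1
    have hw0 : w (i0 : ℕ) = ∑ i ∈ T.erase i0, w (i : ℕ) := by
      have := Finset.sum_erase_add T (fun i => w (i : ℕ)) hi0T
      rw [hsum0] at this
      exact char2_eq_of_add_eq_zero this
    have hcmem : c (i0 : ℕ) ∈ Submodule.span (ZMod 2)
        (↑(SF a b c N.dim (i0 : ℕ)) : Set (Fin M.dim → ZMod 2)) := by
      have haS : ∀ t, t < N.dim → a t ∈ Submodule.span (ZMod 2)
          (↑(SF a b c N.dim (i0 : ℕ)) : Set (Fin M.dim → ZMod 2)) := by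
        intro t ht
        apply Submodule.subset_span
        simp only [SF, Finset.coe_union, Set.mem_union, Finset.coe_image, Set.mem_image,
          Finset.mem_coe, Finset.mem_range]
        exact Or.inl (Or.inl ⟨t, ht, rfl⟩)
      have hbS : ∀ t, t < N.dim → b t ∈ Submodule.span (ZMod 2)
          (↑(SF a b c N.dim (i0 : ℕ)) : Set (Fin M.dim → ZMod 2)) := by
        intro t ht
        apply Submodule.subset_span
        simp only [SF, Finset.coe_union, Set.mem_union, Finset.coe_image, Set.mem_image,
          Finset.mem_coe, Finset.mem_range]
        exact Or.inl (Or.inr ⟨t, ht, rfl⟩)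
      have hcS : ∀ t, t < (i0 : ℕ) → c t ∈ Submodule.span (ZMod 2)
          (↑(SF a b c N.dim (i0 : ℕ)) : Set (Fin M.dim → ZMod 2)) := by
        intro t ht
        apply Submodule.subset_span
        simp only [SF, Finset.coe_union, Set.mem_union, Finset.coe_image, Set.mem_image,
          Finset.mem_coe, Finset.mem_range]
        exact Or.inr ⟨t, ht, rfl⟩
      have hwS : ∀ i : Fin N.dim, (i : ℕ) < (i0 : ℕ) → w (i : ℕ) ∈ Submodule.span (ZMod 2)
          (↑(SF a b c N.dim (i0 : ℕ)) : Set (Fin M.dim → ZMod 2)) := by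
        intro i hi
        rw [hw]
        unfold wv
        refine Submodule.add_mem _ (Submodule.add_mem _ (Submodule.add_mem _
          (haS _ i.isLt) (Submodule.smul_mem _ _ (hbS _ i.isLt))) ?_) (hcS _ hi)
        exact Submodule.sum_mem _ fun t ht => Submodule.smul_mem _ _
          (hbS t (by have := Finset.mem_range.mp ht; omega))
      have hrel : c (i0 : ℕ) = (a (i0 : ℕ) + lam (i0 : ℕ) • b (i0 : ℕ)
          + ∑ t ∈ Finset.range (i0 : ℕ), mu t (i0 : ℕ) • b t) + w (i0 : ℕ) := by
        rw [hw]
        unfold wv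
        rw [cancel1]
      rw [hrel, hw0]
      refine Submodule.add_mem _ (Submodule.add_mem _ (Submodule.add_mem _
        (haS _ i0.isLt) (Submodule.smul_mem _ _ (hbS _ i0.isLt))) ?_) ?_
      · exact Submodule.sum_mem _ fun t ht => Submodule.smul_mem _ _
          (hbS t (by have := Finset.mem_range.mp ht; omega))
      · refine Submodule.sum_mem _ fun i hi => ?_
        have hie := Finset.mem_erase.mp hi
        have hle : i ≤ i0 := Finset.le_max' T i hie.2
        have : (i : ℕ) < (i0 : ℕ) := by
          rcases lt_or_eq_of_le hle with h | h
          · exact h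
          · exact absurd h hie.1
        exact hwS i this
    exact absurd hcmem (hc4 (i0 : ℕ) i0.isLt)
  have hinj : Function.Injective φ := by
    intro y1 y2 h
    have := hker (y1 - y2) (by rw [map_sub, h, sub_self])
    exact sub_eq_zero.mp this
  refine ⟨φ, hinj, ?_⟩
  ext x
  constructor
  · rintro ⟨y, hyE, rfl⟩
    have hy1 : fE N.E y = 1 := fE_one_iff.mpr hyE
    refine ⟨fE_one_iff.mp (by rw [hkey y, hy1]), ⟨y, rfl⟩, ?_⟩
    simp only [Set.mem_singleton_iff]
    intro h
    have : y = 0 := hker y h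
    rw [this] at hyE
    exact N.zero_not_mem hyE
  · rintro ⟨hxE, ⟨y, rfl⟩, hx0⟩
    refine ⟨y, ?_, rfl⟩
    have : fE N.E y = 1 := by rw [← hkey y]; exact fE_one_iff.mpr hxE
    exact fE_one_iff.mp this

/-- If `𝓜` is a class of simple binary matroids closed under isomorphism
and under induced restrictions, every member of `𝓜` lies in `ℰ₃`, and some matroid of
`ℰ₃` is not in `𝓜`, then there is `k` with `χ(M) ≤ k` for all `M ∈ 𝓜`. -/
theorem stmt4 (𝓜 : Set BinMatroid)
    (hiso : ∀ M N : BinMatroid, M ∈ 𝓜 → N.Iso M → N ∈ 𝓜)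
    (hres : ∀ M N : BinMatroid, M ∈ 𝓜 → M.HasIR N → N ∈ 𝓜)
    (hsub : ∀ M ∈ 𝓜, M.MemE 3)
    (hproper : ∃ N : BinMatroid, N.MemE 3 ∧ N ∉ 𝓜) :
    ∃ k : ℕ, ∀ M ∈ 𝓜, M.critNum ≤ k := by
  obtain ⟨N, hN3, hNnm⟩ := hproper
  refine ⟨6 * N.dim + 10, fun M hM => ?_⟩
  by_contra hlt
  push_neg at hlt
  exact hNnm (hres M N hM (main_embed M N (hsub M hM) hN3 hlt))
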